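/- Let {S_i}_{i∈I} be a finite family of communicating systems over pairwise disjoint participant sets, let H = {h_i}_{i∈I} be a set of interfaces for it such that every interface h_i has no mixed states, let CM be a connection model for H, and let K be a connection policy for H complying with CM. If every S_i (i ∈ I) is deadlock-free and K is deadlock-free, then the multicomposition MC({S_i}_{i∈I}, K) is deadlock-free. -/

import Mathlib

namespace CFSM

/-- Direction of a communication action: output (`!`) or input (`?`). -/
inductive Dir : Type where
  | out : Dir
  | inp : Dir
deriving DecidableEq

instance : Fintype Dir where
  elems := {Dir.out, Dir.inp}
  complete := by intro x; cases x <;> simp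

/-- An action `pq!a` (output) or `pq?a` (input) over participants `P` and messages `A`:
`snd` is the sender `p`, `rcv` the receiver `q`, `msg` the message `a`. -/
structure Act (P : Type) (A : Type) : Type where
  snd : P
  rcv : P
  dir : Dir
  msg : A

instance {P A : Type} [Finite P] [Finite A] : Finite (Act P A) :=
  Finite.of_injective (fun l => (l.snd, l.rcv, l.dir, l.msg))
    (fun a b h => by
      cases a; cases b
      simp only [Prod.mk.injEq] at h
      obtain ⟨h1, h2, h3, h4⟩ := h
      subst h1; subst h2; subst h3; subst h4; rfl)

/-- The subject of an action: the sender of an output, the receiver of an input. -/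
def Act.subject {P A : Type} (l : Act P A) : P :=
  match l.dir with
  | .out => l.snd
  | .inp => l.rcv

/-- A communicating system over participants `P` and messages `A`:
one machine (state type, initial state and transition relation) per participant. -/
structure CS (P : Type) (A : Type) : Type 1 where
  St : P → Type
  init : ∀ p, St p
  delta : ∀ p, Set (St p × Act P A × St p)

/-- All actions of the machine of participant `p` have subject `p`
(the name of the machine) and distinct endpoints. -/
def CS.WellFormed {P A : Type} (S : CS P A) : Prop :=
  ∀ p t, t ∈ S.delta p → ((t.2.1 : Act P A).subject = p ∧ t.2.1.snd ≠ t.2.1.rcv)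

/-- A configuration: a local state for each machine and a FIFO buffer
for each ordered pair of participants. -/
structure Config {P A : Type} (S : CS P A) : Type where
  st : ∀ p, S.St p
  ch : P → P → List A

/-- The initial configuration: all machines in their initial state, all channels empty. -/
def CS.initConfig {P A : Type} (S : CS P A) : Config S :=
  ⟨S.init, fun _ _ => []⟩

/-- The labelled transition relation between configurations. -/
def StepL {P A : Type} (S : CS P A) (c : Config S) (l : Act P A) (c' : Config S) : Prop :=
  match l.dir with
  | .out =>
      (c.st l.snd, l, c'.st l.snd) ∈ S.delta l.snd ∧
      (∀ p, p ≠ l.snd → c'.st p = c.st p) ∧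
      c'.ch l.snd l.rcv = c.ch l.snd l.rcv ++ [l.msg] ∧
      (∀ p q, (p, q) ≠ (l.snd, l.rcv) → c'.ch p q = c.ch p q)
  | .inp =>
      (c.st l.rcv, l, c'.st l.rcv) ∈ S.delta l.rcv ∧
      (∀ p, p ≠ l.rcv → c'.st p = c.st p) ∧
      c.ch l.snd l.rcv = l.msg :: c'.ch l.snd l.rcv ∧
      (∀ p q, (p, q) ≠ (l.snd, l.rcv) → c'.ch p q = c.ch p q)

/-- Unlabelled transition relation. -/
def Step {P A : Type} (S : CS P A) (c c' : Config S) : Prop :=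
  ∃ l, StepL S c l c'

/-- Reachability between configurations. -/
def Reach {P A : Type} (S : CS P A) : Config S → Config S → Prop :=
  Relation.ReflTransGen (Step S)

/-- The set of configurations reachable from the initial configuration. -/
def RC {P A : Type} (S : CS P A) : Set (Config S) :=
  {c | Reach S S.initConfig c}

/-- A local state is final if it has no outgoing transition. -/
def FinalSt {Q P A : Type} (δ : Set (Q × Act P A × Q)) (q : Q) : Prop :=
  ∀ l q', (q, l, q') ∉ δ

/-- A local state is receiving if it is not final and all its outgoing
transitions are labelled with input actions. -/
def ReceivingSt {Q P A : Type} (δ : Set (Q × Act P A × Q)) (q : Q) : Prop :=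
  (∃ l q', (q, l, q') ∈ δ) ∧ ∀ l q', (q, l, q') ∈ δ → (l : Act P A).dir = Dir.inp

/-- A local state is mixed if it has at least one outgoing output-labelled
transition and at least one outgoing input-labelled transition. -/
def MixedSt {Q P A : Type} (δ : Set (Q × Act P A × Q)) (q : Q) : Prop :=
  (∃ l q', (q, l, q') ∈ δ ∧ (l : Act P A).dir = Dir.out) ∧
  (∃ l q', (q, l, q') ∈ δ ∧ (l : Act P A).dir = Dir.inp)

/-- A machine has no mixed states. -/
def NoMixed {Q P A : Type} (δ : Set (Q × Act P A × Q)) : Prop :=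
  ∀ q, ¬ MixedSt δ q

/-- Deadlock configuration: all channels empty but all machines in receiving states. -/
def DeadlockConfig {P A : Type} (S : CS P A) (c : Config S) : Prop :=
  (∀ p q, c.ch p q = []) ∧ ∀ p, ReceivingSt (S.delta p) (c.st p)

def DeadlockFree {P A : Type} (S : CS P A) : Prop :=
  ∀ c ∈ RC S, ¬ DeadlockConfig S c

/-- Orphan-message configuration: all machines final but some channel nonempty. -/
def OrphanConfig {P A : Type} (S : CS P A) (c : Config S) : Prop :=
  (∀ p, FinalSt (S.delta p) (c.st p)) ∧ ∃ p q, c.ch p q ≠ []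

def OrphanFree {P A : Type} (S : CS P A) : Prop :=
  ∀ c ∈ RC S, ¬ OrphanConfig S c

/-- Unspecified reception configuration: some machine `r` is in a receiving state and,
for every input transition of `r`, the corresponding channel is nonempty with a
first element different from the expected message. -/
def URConfig {P A : Type} (S : CS P A) (c : Config S) : Prop :=
  ∃ r, ReceivingSt (S.delta r) (c.st r) ∧
    ∀ s a q', (c.st r, Act.mk s r Dir.inp a, q') ∈ S.delta r →
      (c.ch s r ≠ [] ∧ ¬ ∃ w, c.ch s r = a :: w)

def ReceptionErrorFree {P A : Type} (S : CS P A) : Prop :=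
  ∀ c ∈ RC S, ¬ URConfig S c

/-- Progress: every reachable configuration has an outgoing transition or all
machines are in final states. -/
def ProgressProp {P A : Type} (S : CS P A) : Prop :=
  ∀ c ∈ RC S, (∃ c', Step S c c') ∨ ∀ p, FinalSt (S.delta p) (c.st p)

/-- `p`-lock configuration: `p` is in a receiving state and never occurs as the
subject of an action in any transition sequence from `c`. -/
def PLockConfig {P A : Type} (S : CS P A) (c : Config S) (p : P) : Prop :=
  ReceivingSt (S.delta p) (c.st p) ∧
  ∀ c1 l c2, Reach S c c1 → StepL S c1 l c2 → l.subject ≠ p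

def LockFree {P A : Type} (S : CS P A) : Prop :=
  ∀ c ∈ RC S, ∀ p, ¬ PLockConfig S c p

section Composition

variable {I : Type} {P : I → Type} {A : Type}

/-- Messages occurring in input actions of the machine of `p`. -/
def inMsgs {Pp A : Type} (S : CS Pp A) (p : Pp) : Set A :=
  {a | ∃ q s q', (q, Act.mk s p Dir.inp a, q') ∈ S.delta p}

/-- Messages occurring in output actions of the machine of `p`. -/
def outMsgs {Pp A : Type} (S : CS Pp A) (p : Pp) : Set A :=
  {a | ∃ q r q', (q, Act.mk p r Dir.out a, q') ∈ S.delta p}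

/-- `CM` is a connection model for the interfaces `hh i` of the family `S`
(the interface `h_i` is represented by its index `i`). -/
def IsConnModel (S : ∀ i, CS (P i) A) (hh : ∀ i, P i) (CM : Set (I × A × I)) : Prop :=
  ∀ i a,
    (a ∈ inMsgs (S i) (hh i) →
      ∃ j, j ≠ i ∧ a ∈ outMsgs (S j) (hh j) ∧ (i, a, j) ∈ CM) ∧
    (a ∈ outMsgs (S i) (hh i) →
      ∃ j, j ≠ i ∧ a ∈ inMsgs (S j) (hh j) ∧ (j, a, i) ∈ CM)

/-- `CM` is a strong connection model: additionally the connecting partner is unique. -/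
def IsStrongConnModel (S : ∀ i, CS (P i) A) (hh : ∀ i, P i) (CM : Set (I × A × I)) : Prop :=
  IsConnModel S hh CM ∧
  ∀ i a,
    (a ∈ inMsgs (S i) (hh i) → ∃! j, (i, a, j) ∈ CM) ∧
    (a ∈ outMsgs (S i) (hh i) → ∃! j, (j, a, i) ∈ CM)

/-- Conditions (*) and (**) for a candidate transition relation `d` of the local
connection policy of interface `hh i` (the name `k_i` is represented by `i`). -/
def PolicySat (S : ∀ i, CS (P i) A) (hh : ∀ i, P i) (CM : Set (I × A × I)) (i : I)
    (d : Set ((S i).St (hh i) × Act I A × (S i).St (hh i))) : Prop :=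
  (∀ q r a q', (q, Act.mk r (hh i) Dir.inp a, q') ∈ (S i).delta (hh i) →
      ∃ j, j ≠ i ∧ (i, a, j) ∈ CM ∧ (q, Act.mk i j Dir.out a, q') ∈ d) ∧
  (∀ q r a q', (q, Act.mk (hh i) r Dir.out a, q') ∈ (S i).delta (hh i) →
      ∃ j, j ≠ i ∧ (j, a, i) ∈ CM ∧ (q, Act.mk j i Dir.inp a, q') ∈ d)

/-- `d` belongs to the local connection policy set `IS(M_{h_i}, CM)`:
it is a minimal relation satisfying (*) and (**).  (The states `q̇` of the
policy machine are identified with the states `q` of `M_{h_i}`.) -/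
def InIS (S : ∀ i, CS (P i) A) (hh : ∀ i, P i) (CM : Set (I × A × I)) (i : I)
    (d : Set ((S i).St (hh i) × Act I A × (S i).St (hh i))) : Prop :=
  PolicySat S hh CM i d ∧ ∀ d', d' ⊆ d → PolicySat S hh CM i d' → d' = d

/-- The communicating system (over the participant type `I` of names `k_i`)
determined by the family of transition relations `Kd` of a connection policy. -/
def policyCS (S : ∀ i, CS (P i) A) (hh : ∀ i, P i)
    (Kd : ∀ i, Set ((S i).St (hh i) × Act I A × (S i).St (hh i))) : CS I A where
  St := fun i => (S i).St (hh i)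
  init := fun i => (S i).init (hh i)
  delta := Kd

/-- `Kd` is a connection policy for the interfaces `hh` complying with `CM`. -/
def IsConnPolicy (S : ∀ i, CS (P i) A) (hh : ∀ i, P i) (CM : Set (I × A × I))
    (Kd : ∀ i, Set ((S i).St (hh i) × Act I A × (S i).St (hh i))) : Prop :=
  ∀ i, InIS S hh CM i (Kd i)

/-- States of the gateway for interface `hh i`: the original states plus one
fresh state per transition of `M_{h_i}`. -/
abbrev GWState (S : ∀ i, CS (P i) A) (hh : ∀ i, P i) (i : I) : Type :=
  (S i).St (hh i) ⊕ ((S i).St (hh i) × Act (P i) A × (S i).St (hh i))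

/-- Lifting of a local action of system `i` to the composed participant type. -/
def liftAct (i : I) (l : Act (P i) A) : Act ((j : I) × P j) A :=
  Act.mk ⟨i, l.snd⟩ ⟨i, l.rcv⟩ l.dir l.msg

/-- Transition relation of the gateway `M_{h_i} ⟲ M_{k_i}`. -/
def GWdelta (S : ∀ i, CS (P i) A) (hh : ∀ i, P i)
    (Kd : ∀ i, Set ((S i).St (hh i) × Act I A × (S i).St (hh i))) (i : I) :
    Set (GWState S hh i × Act ((j : I) × P j) A × GWState S hh i) :=
  {x | ∃ q a q',
    (∃ s r, (q, Act.mk (hh i) s Dir.out a, q') ∈ (S i).delta (hh i) ∧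
        (q, Act.mk r i Dir.inp a, q') ∈ Kd i ∧
        (x = (Sum.inl q, Act.mk ⟨r, hh r⟩ ⟨i, hh i⟩ Dir.inp a,
              Sum.inr (q, Act.mk (hh i) s Dir.out a, q')) ∨
         x = (Sum.inr (q, Act.mk (hh i) s Dir.out a, q'),
              Act.mk ⟨i, hh i⟩ ⟨i, s⟩ Dir.out a, Sum.inl q'))) ∨
    (∃ s r, (q, Act.mk s (hh i) Dir.inp a, q') ∈ (S i).delta (hh i) ∧
        (q, Act.mk i r Dir.out a, q') ∈ Kd i ∧
        (x = (Sum.inl q, Act.mk ⟨i, s⟩ ⟨i, hh i⟩ Dir.inp a,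
              Sum.inr (q, Act.mk s (hh i) Dir.inp a, q')) ∨
         x = (Sum.inr (q, Act.mk s (hh i) Dir.inp a, q'),
              Act.mk ⟨i, hh i⟩ ⟨r, hh r⟩ Dir.out a, Sum.inl q')))}

open Classical in
/-- State type of the machine of participant `⟨i, p⟩` in the multicomposition:
the gateway state type if `p` is the interface of system `i`, the original
state type otherwise. -/
noncomputable def MCSt (S : ∀ i, CS (P i) A) (hh : ∀ i, P i) (x : (i : I) × P i) : Type :=
  if x.2 = hh x.1 then GWState S hh x.1 else (S x.1).St x.2

/-- The multicomposition `MC({S_i}, K)`: all machines of the single systems,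
with the machine of each interface `hh i` replaced by its gateway. -/
noncomputable def MC (S : ∀ i, CS (P i) A) (hh : ∀ i, P i)
    (Kd : ∀ i, Set ((S i).St (hh i) × Act I A × (S i).St (hh i))) :
    CS ((i : I) × P i) A where
  St := MCSt S hh
  init := fun x => by
    by_cases hp : x.2 = hh x.1
    · have h : MCSt S hh x = GWState S hh x.1 := by simp [MCSt, hp]
      rw [h]; exact Sum.inl ((S x.1).init (hh x.1))
    · have h : MCSt S hh x = (S x.1).St x.2 := by simp [MCSt, hp]
      rw [h]; exact (S x.1).init x.2
  delta := fun x => by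
    by_cases hp : x.2 = hh x.1
    · have h : MCSt S hh x = GWState S hh x.1 := by simp [MCSt, hp]
      rw [h]; exact GWdelta S hh Kd x.1
    · have h : MCSt S hh x = (S x.1).St x.2 := by simp [MCSt, hp]
      rw [h]
      exact {t | ∃ q l q', (q, l, q') ∈ (S x.1).delta x.2 ∧ t = (q, liftAct x.1 l, q')}

/-- The state of the gateway of interface `hh i` in a configuration of the
multicomposition, as an element of `GWState`. -/
noncomputable def toGW (S : ∀ i, CS (P i) A) (hh : ∀ i, P i) (i : I)
    (x : MCSt S hh ⟨i, hh i⟩) : GWState S hh i :=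
  cast (by simp [MCSt]) x

/-- The state of a non-interface participant in a configuration of the
multicomposition, as an element of its original state type. -/
noncomputable def toLoc (S : ∀ i, CS (P i) A) (hh : ∀ i, P i) {i : I} {p : P i}
    (hp : p ≠ hh i) (x : MCSt S hh ⟨i, p⟩) : (S i).St p :=
  cast (by simp [MCSt, hp]) x

/-- Projection of a configuration of the multicomposition to system `S i`,
assuming the gateway state of `hh i` is not a fresh intermediate state
(i.e. it is of the form `Sum.inl q`). -/
noncomputable def projSys (S : ∀ i, CS (P i) A) (hh : ∀ i, P i)
    (Kd : ∀ i, Set ((S i).St (hh i) × Act I A × (S i).St (hh i)))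
    (i : I) (s : Config (MC S hh Kd))
    (hq : ∃ q, toGW S hh i (s.st ⟨i, hh i⟩) = Sum.inl q) : Config (S i) where
  st := fun p => by
    by_cases hp : p = hh i
    · rw [hp]; exact hq.choose
    · exact toLoc S hh hp (s.st ⟨i, p⟩)
  ch := fun p q => s.ch ⟨i, p⟩ ⟨i, q⟩

/-- Projection of a configuration of the multicomposition to the connection
policy `K`, assuming no gateway is in a fresh intermediate state. -/
noncomputable def projPolicy (S : ∀ i, CS (P i) A) (hh : ∀ i, P i)
    (Kd : ∀ i, Set ((S i).St (hh i) × Act I A × (S i).St (hh i)))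
    (s : Config (MC S hh Kd))
    (hq : ∀ i, ∃ q, toGW S hh i (s.st ⟨i, hh i⟩) = Sum.inl q) :
    Config (policyCS S hh Kd) where
  st := fun i => (hq i).choose
  ch := fun i j => s.ch ⟨i, hh i⟩ ⟨j, hh j⟩

variable (S : ∀ i, CS (P i) A) (hh : ∀ i, P i)
  (Kd : ∀ i, Set ((S i).St (hh i) × Act I A × (S i).St (hh i)))

theorem mpr_heq {α β : Sort _} (e : α = β) (b : β) : HEq (Eq.mpr e b) b := by subst e; rfl

lemma mem_heq_pair {α β A' : Type} (h : α = β) {s : Set (α × A' × α)} {t : Set (β × A' × β)}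
    (hs : HEq s t) (x x' : α) (l : A') : ((x, l, x') ∈ s) ↔ ((cast h x, l, cast h x') ∈ t) := by
  subst h; rw [heq_iff_eq] at hs; subst hs; rfl

lemma mem_delta_gw (i : I) (x x' : (MC S hh Kd).St ⟨i, hh i⟩) (l : Act ((j : I) × P j) A) :
    ((x, l, x') ∈ (MC S hh Kd).delta ⟨i, hh i⟩) ↔
      (toGW S hh i x, l, toGW S hh i x') ∈ GWdelta S hh Kd i := by
  have h : MCSt S hh ⟨i, hh i⟩ = GWState S hh i := by simp [MCSt]
  refine mem_heq_pair h ?_ x x' l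
  simp only [MC]
  rw [dif_pos trivial]
  exact mpr_heq _ _

lemma mem_delta_loc (i : I) {p : P i} (hp : p ≠ hh i) (x x' : (MC S hh Kd).St ⟨i, p⟩)
    (l : Act ((j : I) × P j) A) :
    ((x, l, x') ∈ (MC S hh Kd).delta ⟨i, p⟩) ↔
      ∃ l0, (toLoc S hh hp x, l0, toLoc S hh hp x') ∈ (S i).delta p ∧ l = liftAct i l0 := by
  have h : (MC S hh Kd).St ⟨i, p⟩ = (S i).St p := by
    show MCSt S hh ⟨i, p⟩ = _; simp [MCSt, hp]
  rw [mem_heq_pair h (s := (MC S hh Kd).delta ⟨i, p⟩)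
    (t := {t | ∃ q l q', (q, l, q') ∈ (S i).delta p ∧ t = (q, liftAct i l, q')}) ?hs x x' l]
  case hs =>
    simp only [MC]
    rw [dif_neg hp]
    exact mpr_heq _ _
  show (cast h x, l, cast h x') ∈ {t | ∃ q l q', (q, l, q') ∈ (S i).delta p ∧ t = (q, liftAct i l, q')} ↔ _
  constructor
  · rintro ⟨q, l0, q', hmem, heq⟩
    rw [Prod.mk.injEq, Prod.mk.injEq] at heq
    obtain ⟨h1, h2, h3⟩ := heq
    refine ⟨l0, ?_, h2⟩
    show (cast h x, l0, cast h x') ∈ _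
    rw [h1, h3]; exact hmem
  · rintro ⟨l0, hmem, rfl⟩
    exact ⟨_, l0, _, hmem, rfl⟩

lemma toGW_init (i : I) : toGW S hh i ((MC S hh Kd).init ⟨i, hh i⟩) = Sum.inl ((S i).init (hh i)) := by
  refine cast_eq_iff_heq.mpr ?_
  simp only [MC]
  rw [dif_pos trivial]
  exact mpr_heq _ _

lemma toLoc_init (i : I) {p : P i} (hp : p ≠ hh i) :
    toLoc S hh hp ((MC S hh Kd).init ⟨i, p⟩) = (S i).init p := by
  refine cast_eq_iff_heq.mpr ?_
  simp only [MC]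
  rw [dif_neg hp]
  exact mpr_heq _ _

open Classical in
/-- Pending output of a gateway intermediate state towards local participant `r`. -/
noncomputable def pend {S : ∀ i, CS (P i) A} {hh : ∀ i, P i} {i : I}
    (g : GWState S hh i) (r : P i) : List A :=
  match g with
  | Sum.inl _ => []
  | Sum.inr (_, l, _) => if l.dir = Dir.out ∧ l.rcv = r then [l.msg] else []

@[simp] lemma pend_inl {S : ∀ i, CS (P i) A} {hh : ∀ i, P i} {i : I}
    (q : (S i).St (hh i)) (r : P i) : pend (Sum.inl q : GWState S hh i) r = [] := rfl

variable (S : ∀ i, CS (P i) A) (hh : ∀ i, P i)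
  (Kd : ∀ i, Set ((S i).St (hh i) × Act I A × (S i).St (hh i)))

/-- The simulation invariant relating a configuration of the multicomposition with
configurations of the single systems and of the connection policy. -/
structure Rel (s : Config (MC S hh Kd)) (c : ∀ i, Config (S i))
    (ck : Config (policyCS S hh Kd)) : Prop where
  stInl : ∀ i q, toGW S hh i (s.st ⟨i, hh i⟩) = Sum.inl q →
    (c i).st (hh i) = q ∧ ck.st i = q
  stInr : ∀ i t, toGW S hh i (s.st ⟨i, hh i⟩) = Sum.inr t →
    (c i).st (hh i) = t.2.2 ∧
      ((t.2.1 : Act (P i) A).dir = Dir.out → ck.st i = t.2.2) ∧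
      ((t.2.1 : Act (P i) A).dir = Dir.inp → ck.st i = t.1)
  stLoc : ∀ i p (hp : p ≠ hh i), (c i).st p = toLoc S hh hp (s.st ⟨i, p⟩)
  chLoc : ∀ i (p q : P i), p ≠ hh i → s.ch ⟨i, p⟩ ⟨i, q⟩ = (c i).ch p q
  chGw : ∀ i (r : P i),
    (c i).ch (hh i) r = s.ch ⟨i, hh i⟩ ⟨i, r⟩ ++ pend (toGW S hh i (s.st ⟨i, hh i⟩)) r
  chK : ∀ i j, ck.ch i j = s.ch ⟨i, hh i⟩ ⟨j, hh j⟩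
  chCross : ∀ (i j : I) (p : P i) (q : P j), i ≠ j → (p ≠ hh i ∨ q ≠ hh j) →
    s.ch ⟨i, p⟩ ⟨j, q⟩ = []

/-- Every transition of a minimal connection policy machine is the flipped image of
a transition of the interface machine. -/
lemma kd_shape {CM : Set (I × A × I)} (hK : IsConnPolicy S hh CM Kd) (i : I)
    {t : (S i).St (hh i) × Act I A × (S i).St (hh i)} (ht : t ∈ Kd i) :
    (∃ q j a q', j ≠ i ∧ t = (q, Act.mk i j Dir.out a, q') ∧
       ∃ s, (q, Act.mk s (hh i) Dir.inp a, q') ∈ (S i).delta (hh i)) ∨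
    (∃ q j a q', j ≠ i ∧ t = (q, Act.mk j i Dir.inp a, q') ∧
       ∃ s, (q, Act.mk (hh i) s Dir.out a, q') ∈ (S i).delta (hh i)) := by
  obtain ⟨hsat, hmin⟩ := hK i
  set Sh : ((S i).St (hh i) × Act I A × (S i).St (hh i)) → Prop := fun u =>
    (∃ q j a q', j ≠ i ∧ u = (q, Act.mk i j Dir.out a, q') ∧
       ∃ s, (q, Act.mk s (hh i) Dir.inp a, q') ∈ (S i).delta (hh i)) ∨
    (∃ q j a q', j ≠ i ∧ u = (q, Act.mk j i Dir.inp a, q') ∧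
       ∃ s, (q, Act.mk (hh i) s Dir.out a, q') ∈ (S i).delta (hh i)) with hSh
  have hD : {u | u ∈ Kd i ∧ Sh u} = Kd i := by
    refine hmin _ (fun u hu => hu.1) ?_
    constructor
    · intro q r a q' hmem
      obtain ⟨j, hj, hcm, hkd⟩ := hsat.1 q r a q' hmem
      exact ⟨j, hj, hcm, hkd, Or.inl ⟨q, j, a, q', hj, rfl, r, hmem⟩⟩
    · intro q r a q' hmem
      obtain ⟨j, hj, hcm, hkd⟩ := hsat.2 q r a q' hmem
      exact ⟨j, hj, hcm, hkd, Or.inr ⟨q, j, a, q', hj, rfl, r, hmem⟩⟩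
  rw [← hD] at ht
  exact ht.2

/-- Successor configuration for an output step. -/
noncomputable def outCfg {Pp : Type} (S0 : CS Pp A) (c : Config S0) (p r : Pp) (a : A)
    (q' : S0.St p) : Config S0 :=
  open Classical in
  ⟨Function.update c.st p q', fun x y => if x = p ∧ y = r then c.ch p r ++ [a] else c.ch x y⟩

/-- Successor configuration for an input step. -/
noncomputable def inpCfg {Pp : Type} (S0 : CS Pp A) (c : Config S0) (p r : Pp) (a : A)
    (q' : S0.St r) (w : List A) : Config S0 :=
  open Classical in
  ⟨Function.update c.st r q', fun x y => if x = p ∧ y = r then w else c.ch x y⟩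

lemma stepL_outCfg {Pp : Type} (S0 : CS Pp A) (c : Config S0) {p r : Pp} {a : A}
    {q' : S0.St p} (hmem : (c.st p, Act.mk p r Dir.out a, q') ∈ S0.delta p) :
    StepL S0 c (Act.mk p r Dir.out a) (outCfg S0 c p r a q') := by
  classical
  refine ⟨?_, ?_, ?_, ?_⟩
  · simpa [outCfg, Function.update_self] using hmem
  · intro x hx; simp [outCfg, Function.update_of_ne hx]
  · simp [outCfg]
  · intro x y hxy
    have : ¬ (x = p ∧ y = r) := by
      rintro ⟨rfl, rfl⟩; exact hxy rfl
    simp [outCfg, this]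

lemma stepL_inpCfg {Pp : Type} (S0 : CS Pp A) (c : Config S0) {p r : Pp} {a : A}
    {q' : S0.St r} {w : List A} (hmem : (c.st r, Act.mk p r Dir.inp a, q') ∈ S0.delta r)
    (hch : c.ch p r = a :: w) :
    StepL S0 c (Act.mk p r Dir.inp a) (inpCfg S0 c p r a q' w) := by
  classical
  refine ⟨?_, ?_, ?_, ?_⟩
  · simpa [inpCfg, Function.update_self] using hmem
  · intro x hx; simp [inpCfg, Function.update_of_ne hx]
  · simpa [inpCfg] using hch
  · intro x y hxy
    have : ¬ (x = p ∧ y = r) := by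
      rintro ⟨rfl, rfl⟩; exact hxy rfl
    simp [inpCfg, this]

lemma pair_ne_fst {α β : Type _} {a a' : α} {b b' : β} (h : a ≠ a') : (a, b) ≠ (a', b') := by
  intro he; exact h (congrArg Prod.fst he)

lemma pair_ne_snd {α β : Type _} {a a' : α} {b b' : β} (h : b ≠ b') : (a, b) ≠ (a', b') := by
  intro he; exact h (congrArg Prod.snd he)

open Classical in
lemma pend_inr {S : ∀ i, CS (P i) A} {hh : ∀ i, P i} {i : I}
    (q q' : (S i).St (hh i)) (l : Act (P i) A) (r : P i) :
    pend (Sum.inr (q, l, q') : GWState S hh i) r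
      = if l.dir = Dir.out ∧ l.rcv = r then [l.msg] else [] := rfl

lemma pair_sig_ne {I : Type} {P : I → Type} {i : I} {x y p r : P i} (h : ¬ (x = p ∧ y = r)) :
    ((⟨i, x⟩ : (k : I) × P k), (⟨i, y⟩ : (k : I) × P k)) ≠ (⟨i, p⟩, ⟨i, r⟩) := by
  intro he; rw [Prod.mk.injEq] at he
  exact h ⟨heq_iff_eq.mp (Sigma.mk.inj_iff.mp he.1).2, heq_iff_eq.mp (Sigma.mk.inj_iff.mp he.2).2⟩

lemma sig_ne_fst {i j : I} (p : P i) (q : P j) (h : i ≠ j) :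
    (⟨i, p⟩ : (k : I) × P k) ≠ ⟨j, q⟩ := by
  intro he; exact h (congrArg Sigma.fst he)

lemma sig_ne_snd {i : I} {p q : P i} (h : p ≠ q) :
    (⟨i, p⟩ : (k : I) × P k) ≠ ⟨i, q⟩ := by
  intro he
  exact h (by simpa using (Sigma.mk.inj_iff.mp he).2)

lemma inv_reach {CM : Set (I × A × I)}
    (hwf : ∀ i, (S i).WellFormed) (hK : IsConnPolicy S hh CM Kd) :
    ∀ s ∈ RC (MC S hh Kd), ∃ (c : ∀ i, Config (S i)) (ck : Config (policyCS S hh Kd)),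
      (∀ i, c i ∈ RC (S i)) ∧ ck ∈ RC (policyCS S hh Kd) ∧ Rel S hh Kd s c ck := by
  intro s hs
  induction hs with
  | refl =>
    refine ⟨fun i => (S i).initConfig, (policyCS S hh Kd).initConfig,
      fun i => Relation.ReflTransGen.refl, Relation.ReflTransGen.refl, ?_⟩
    constructor
    · intro i q hq
      rw [show ((MC S hh Kd).initConfig.st ⟨i, hh i⟩) = (MC S hh Kd).init ⟨i, hh i⟩ from rfl,
        toGW_init] at hq
      cases hq
      exact ⟨rfl, rfl⟩
    · intro i t ht
      rw [show ((MC S hh Kd).initConfig.st ⟨i, hh i⟩) = (MC S hh Kd).init ⟨i, hh i⟩ from rfl,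
        toGW_init] at ht
      cases ht
    · intro i p hp
      exact (toLoc_init S hh Kd i hp).symm
    · intro i p q hp; rfl
    · intro i r
      rw [show ((MC S hh Kd).initConfig.st ⟨i, hh i⟩) = (MC S hh Kd).init ⟨i, hh i⟩ from rfl,
        toGW_init]
      rfl
    · intro i j; rfl
    · intro i j p q _ _; rfl
  | @tail s1 s2 hreach hstep ih =>
    classical
    obtain ⟨c, ck, hcR, hckR, hrel⟩ := ih
    obtain ⟨⟨ls, lr, ld, a⟩, hstep⟩ := hstep
    cases ld with
    | out =>
      obtain ⟨i, p⟩ := ls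
      obtain ⟨hmem, hst, hch1, hch2⟩ := hstep
      by_cases hp : p = hh i
      · subst hp
        rw [mem_delta_gw] at hmem
        simp only [GWdelta, Set.mem_setOf_eq] at hmem
        obtain ⟨q, a0, q', hdis⟩ := hmem
        rcases hdis with ⟨s0, r0, hdel, hkd, hx | hx⟩ | ⟨s0, r0, hdel, hkd, hx | hx⟩
        · -- input edge, contradiction with dir = out
          simp only [Prod.mk.injEq, Act.mk.injEq] at hx
          exact absurd hx.2.1.2.2.1 (by simp)
        · -- O1 : gateway forwards pending message into its own system
          simp only [Prod.mk.injEq, Act.mk.injEq] at hx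
          obtain ⟨hg, ⟨-, hlr, -, ha⟩, hg'⟩ := hx
          subst hlr; subst ha
          obtain ⟨hc_st, hck_out, -⟩ := hrel.stInr i _ hg
          have hck_st : ck.st i = q' := hck_out rfl
          have hs0 : s0 ≠ hh i := Ne.symm (hwf i (hh i) _ hdel).2
          refine ⟨c, ck, hcR, hckR, ?_⟩
          constructor
          · intro j qj hq
            by_cases hj : j = i
            · subst hj
              rw [hg'] at hq
              cases hq
              exact ⟨hc_st, hck_st⟩
            · rw [hst _ (sig_ne_fst _ _ hj)] at hq
              exact hrel.stInl j qj hq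
          · intro j t ht
            by_cases hj : j = i
            · subst hj; rw [hg'] at ht; cases ht
            · rw [hst _ (sig_ne_fst _ _ hj)] at ht
              exact hrel.stInr j t ht
          · intro j x hx
            have hpt : (⟨j, x⟩ : (k : I) × P k) ≠ ⟨i, hh i⟩ := by
              rcases eq_or_ne j i with rfl | hj
              · exact sig_ne_snd hx
              · exact sig_ne_fst _ _ hj
            rw [hrel.stLoc j x hx, hst _ hpt]
          · intro j x y hx
            have hpt : (⟨j, x⟩ : (k : I) × P k) ≠ ⟨i, hh i⟩ := by
              rcases eq_or_ne j i with rfl | hj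
              · exact sig_ne_snd hx
              · exact sig_ne_fst _ _ hj
            rw [hch2 _ _ (pair_ne_fst hpt)]
            exact hrel.chLoc j x y hx
          · intro j r
            by_cases hj : j = i
            · subst hj
              rw [hg', pend_inl, List.append_nil]
              by_cases hr : r = s0
              · subst hr
                rw [hch1, hrel.chGw _ r, hg, pend_inr]
                simp
              · rw [hch2 _ _ (pair_ne_snd (sig_ne_snd hr)), hrel.chGw _ r, hg, pend_inr]
                simp [Ne.symm hr]
            · rw [hst _ (sig_ne_fst _ _ hj), hch2 _ _ (pair_ne_fst (sig_ne_fst _ _ hj))]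
              exact hrel.chGw j r
          · intro x y
            have hpt : (⟨y, hh y⟩ : (k : I) × P k) ≠ ⟨i, s0⟩ := by
              rcases eq_or_ne y i with rfl | hy
              · exact sig_ne_snd (Ne.symm hs0)
              · exact sig_ne_fst _ _ hy
            rw [hch2 _ _ (pair_ne_snd hpt)]
            exact hrel.chK x y
          · intro x y px qy hxy hor
            rw [hch2 _ _ ?_]
            · exact hrel.chCross x y px qy hxy hor
            · intro he
              apply hxy
              have h1 := congrArg (fun z => z.1.1) he
              have h2 := congrArg (fun z => z.2.1) he
              simp only at h1 h2
              rw [h1, h2]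
        · simp only [Prod.mk.injEq, Act.mk.injEq] at hx
          exact absurd hx.2.1.2.2.1 (by simp)
        · -- O2 : gateway sends to another gateway; mirror K output
          simp only [Prod.mk.injEq, Act.mk.injEq] at hx
          obtain ⟨hg, ⟨-, hlr, -, ha⟩, hg'⟩ := hx
          subst hlr; subst ha
          obtain ⟨hc_st, -, hck_inp⟩ := hrel.stInr i _ hg
          have hck_st : ck.st i = q := hck_inp rfl
          have hr0 : r0 ≠ i := by
            rcases kd_shape S hh Kd hK i hkd with ⟨q2, j2, a2, q2', hj2, hteq, -⟩ |
              ⟨q2, j2, a2, q2', hj2, hteq, -⟩ <;>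
              simp only [Prod.mk.injEq, Act.mk.injEq] at hteq
            · rw [hteq.2.1.2.1]; exact hj2
            · exact absurd hteq.2.1.2.2.1 (by simp)
          have hkmem : (ck.st i, Act.mk i r0 Dir.out a, q') ∈ (policyCS S hh Kd).delta i := by
            rw [hck_st]; exact hkd
          refine ⟨c, outCfg (policyCS S hh Kd) ck i r0 a q', hcR,
            Relation.ReflTransGen.tail hckR ⟨_, stepL_outCfg _ _ hkmem⟩, ?_⟩
          constructor
          · intro j qj hq
            by_cases hj : j = i
            · subst hj
              rw [hg'] at hq
              cases hq
              exact ⟨hc_st, by show Function.update ck.st j qj j = qj; exact Function.update_self _ _ _⟩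
            · rw [hst _ (sig_ne_fst _ _ hj)] at hq
              obtain ⟨h1, h2⟩ := hrel.stInl j qj hq
              exact ⟨h1, (Function.update_of_ne hj _ _).trans h2⟩
          · intro j t ht
            by_cases hj : j = i
            · subst hj; rw [hg'] at ht; cases ht
            · rw [hst _ (sig_ne_fst _ _ hj)] at ht
              obtain ⟨h1, h2, h3⟩ := hrel.stInr j t ht
              refine ⟨h1, ?_, ?_⟩ <;> intro hd <;>
                simp only [outCfg, Function.update_of_ne hj]
              · exact (Function.update_of_ne hj _ _).trans (h2 hd)
              · exact (Function.update_of_ne hj _ _).trans (h3 hd)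
          · intro j x hx
            have hpt : (⟨j, x⟩ : (k : I) × P k) ≠ ⟨i, hh i⟩ := by
              rcases eq_or_ne j i with rfl | hj
              · exact sig_ne_snd hx
              · exact sig_ne_fst _ _ hj
            rw [hrel.stLoc j x hx, hst _ hpt]
          · intro j x y hx
            have hpt : (⟨j, x⟩ : (k : I) × P k) ≠ ⟨i, hh i⟩ := by
              rcases eq_or_ne j i with rfl | hj
              · exact sig_ne_snd hx
              · exact sig_ne_fst _ _ hj
            rw [hch2 _ _ (pair_ne_fst hpt)]
            exact hrel.chLoc j x y hx
          · intro j r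
            by_cases hj : j = i
            · subst hj
              rw [hg', pend_inl, List.append_nil,
                hch2 _ _ (pair_ne_snd (sig_ne_fst _ _ (Ne.symm hr0))),
                hrel.chGw _ r, hg, pend_inr]
              simp
            · rw [hst _ (sig_ne_fst _ _ hj), hch2 _ _ (pair_ne_fst (sig_ne_fst _ _ hj))]
              exact hrel.chGw j r
          · intro x y
            by_cases hxy : x = i ∧ y = r0
            · obtain ⟨rfl, rfl⟩ := hxy
              rw [hch1]
              simp only [outCfg]
              rw [if_pos (by simp : (True ∧ True : Prop)), hrel.chK x y]
            · have hne : ((⟨x, hh x⟩ : (k : I) × P k), (⟨y, hh y⟩ : (k : I) × P k)) ≠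
                  (⟨i, hh i⟩, ⟨r0, hh r0⟩) := by
                intro he
                apply hxy
                have h1 := congrArg (fun z => z.1.1) he
                have h2 := congrArg (fun z => z.2.1) he
                simp only at h1 h2
                exact ⟨h1, h2⟩
              rw [hch2 _ _ hne]
              simp only [outCfg]
              rw [if_neg hxy]
              exact hrel.chK x y
          · intro x y px qy hxy hor
            rw [hch2 _ _ ?_]
            · exact hrel.chCross x y px qy hxy hor
            · intro he
              rw [Prod.mk.injEq] at he
              obtain ⟨he1, he2⟩ := he
              rcases hor with hpx | hqy
              · obtain ⟨rfl, h2⟩ := Sigma.mk.inj_iff.mp he1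
                exact hpx (heq_iff_eq.mp h2)
              · obtain ⟨rfl, h2⟩ := Sigma.mk.inj_iff.mp he2
                exact hqy (heq_iff_eq.mp h2)
      · -- local output in system i
        rw [mem_delta_loc S hh Kd i hp] at hmem
        obtain ⟨⟨l0s, l0r, l0d, l0m⟩, hmem0, heq⟩ := hmem
        simp only [liftAct, Act.mk.injEq] at heq
        obtain ⟨hsnd, hlr, hdir, hmsg⟩ := heq
        have hps : p = l0s := heq_iff_eq.mp (Sigma.mk.inj_iff.mp hsnd).2
        subst hps; subst hlr; subst hdir; subst hmsg
        have hgwne : ∀ j : I, (⟨j, hh j⟩ : (k : I) × P k) ≠ ⟨i, p⟩ := by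
          intro j; rcases eq_or_ne j i with rfl | hj
          · exact sig_ne_snd (Ne.symm hp)
          · exact sig_ne_fst _ _ hj
        set cnew := outCfg (S i) (c i) p l0r a (toLoc S hh hp (s2.st ⟨i, p⟩)) with hcnew
        have hstep_i : StepL (S i) (c i) (Act.mk p l0r Dir.out a) cnew :=
          stepL_outCfg _ _ (by rw [hrel.stLoc i p hp]; exact hmem0)
        refine ⟨Function.update c i cnew, ck, ?_, hckR, ?_⟩
        · intro j; by_cases hj : j = i
          · subst hj; rw [Function.update_self]
            exact Relation.ReflTransGen.tail (hcR j) ⟨_, hstep_i⟩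
          · rw [Function.update_of_ne hj]; exact hcR j
        constructor
        · intro j qj hq
          rw [hst _ (hgwne j)] at hq
          obtain ⟨h1, h2⟩ := hrel.stInl j qj hq
          refine ⟨?_, h2⟩
          by_cases hj : j = i
          · subst hj
            rw [Function.update_self]
            show (Function.update (c j).st p _) (hh j) = qj
            rw [Function.update_of_ne (Ne.symm hp)]
            exact h1
          · rw [Function.update_of_ne hj]; exact h1
        · intro j t ht
          rw [hst _ (hgwne j)] at ht
          obtain ⟨h1, h2, h3⟩ := hrel.stInr j t ht
          refine ⟨?_, h2, h3⟩
          by_cases hj : j = i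
          · subst hj
            rw [Function.update_self]
            show (Function.update (c j).st p _) (hh j) = _
            rw [Function.update_of_ne (Ne.symm hp)]
            exact h1
          · rw [Function.update_of_ne hj]; exact h1
        · intro j x hx
          by_cases hj : j = i
          · subst hj
            rw [Function.update_self]
            by_cases hxp : x = p
            · subst hxp
              show (Function.update (c j).st x _) x = _
              rw [Function.update_self]
            · show (Function.update (c j).st p _) x = _
              rw [Function.update_of_ne hxp, hrel.stLoc j x hx,
                hst _ (sig_ne_snd hxp)]
          · rw [Function.update_of_ne hj, hrel.stLoc j x hx,
              hst _ (sig_ne_fst _ _ hj)]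
        · intro j x y hx
          by_cases hj : j = i
          · subst hj
            rw [Function.update_self]
            by_cases hxy : x = p ∧ y = l0r
            · obtain ⟨rfl, rfl⟩ := hxy
              rw [hch1]
              show _ = if x = x ∧ y = y then (c j).ch x y ++ [a] else _
              rw [if_pos ⟨rfl, rfl⟩, hrel.chLoc j x y hx]
            · rw [hch2 _ _ (pair_sig_ne hxy)]
              show _ = if x = p ∧ y = l0r then _ else (c j).ch x y
              rw [if_neg hxy]
              exact hrel.chLoc j x y hx
          · rw [Function.update_of_ne hj, hch2 _ _ (pair_ne_fst (sig_ne_fst _ _ hj))]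
            exact hrel.chLoc j x y hx
        · intro j r
          have h2 : s2.ch ⟨j, hh j⟩ ⟨j, r⟩ = s1.ch ⟨j, hh j⟩ ⟨j, r⟩ :=
            hch2 _ _ (pair_ne_fst (hgwne j))
          by_cases hj : j = i
          · subst hj
            rw [Function.update_self]
            show (if hh j = p ∧ r = l0r then _ else (c j).ch (hh j) r) = _
            rw [if_neg (fun hc => hp hc.1.symm), h2, hst _ (hgwne j)]
            exact hrel.chGw j r
          · rw [Function.update_of_ne hj, h2, hst _ (hgwne j)]
            exact hrel.chGw j r
        · intro x y
          rw [hch2 _ _ (pair_ne_fst (hgwne x))]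
          exact hrel.chK x y
        · intro x y px qy hxy hor
          rw [hch2 _ _ ?_]
          · exact hrel.chCross x y px qy hxy hor
          · intro he
            apply hxy
            have h1 := congrArg (fun z => z.1.1) he
            have h2 := congrArg (fun z => z.2.1) he
            simp only at h1 h2
            rw [h1, h2]
    | inp =>
      obtain ⟨i, p⟩ := lr
      obtain ⟨hmem, hst, hch1, hch2⟩ := hstep
      by_cases hp : p = hh i
      · subst hp
        rw [mem_delta_gw] at hmem
        simp only [GWdelta, Set.mem_setOf_eq] at hmem
        obtain ⟨q, a0, q', hdis⟩ := hmem
        rcases hdis with ⟨s0, r0, hdel, hkd, hx | hx⟩ | ⟨s0, r0, hdel, hkd, hx | hx⟩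
        · -- I1 : gateway receives from another gateway; mirror K input and S_i output
          simp only [Prod.mk.injEq, Act.mk.injEq] at hx
          obtain ⟨hg, ⟨hls, -, -, ha⟩, hg'⟩ := hx
          subst hls; subst ha
          obtain ⟨hc_st, hck_st⟩ := hrel.stInl i q hg
          have hr0 : r0 ≠ i := by
            rcases kd_shape S hh Kd hK i hkd with ⟨q2, j2, a2, q2', hj2, hteq, -⟩ |
              ⟨q2, j2, a2, q2', hj2, hteq, -⟩ <;>
              simp only [Prod.mk.injEq, Act.mk.injEq] at hteq
            · exact absurd hteq.2.1.2.2.1 (by simp)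
            · rw [hteq.2.1.1]; exact hj2
          have hs0 : s0 ≠ hh i := Ne.symm (hwf i (hh i) _ hdel).2
          set cnew := outCfg (S i) (c i) (hh i) s0 a q' with hcnew
          have hstep_i : StepL (S i) (c i) (Act.mk (hh i) s0 Dir.out a) cnew :=
            stepL_outCfg _ _ (by rw [hc_st]; exact hdel)
          set cknew := inpCfg (policyCS S hh Kd) ck r0 i a q'
            (s2.ch ⟨r0, hh r0⟩ ⟨i, hh i⟩) with hcknew
          have hstep_k : StepL (policyCS S hh Kd) ck (Act.mk r0 i Dir.inp a) cknew :=
            stepL_inpCfg _ _ (by rw [hck_st]; exact hkd)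
              (by rw [hrel.chK r0 i, hch1])
          refine ⟨Function.update c i cnew, cknew, ?_,
            Relation.ReflTransGen.tail hckR ⟨_, hstep_k⟩, ?_⟩
          · intro j; by_cases hj : j = i
            · subst hj; rw [Function.update_self]
              exact Relation.ReflTransGen.tail (hcR j) ⟨_, hstep_i⟩
            · rw [Function.update_of_ne hj]; exact hcR j
          constructor
          · intro j qj hq
            by_cases hj : j = i
            · subst hj; rw [hg'] at hq; cases hq
            · rw [hst _ (sig_ne_fst _ _ hj)] at hq
              obtain ⟨h1, h2⟩ := hrel.stInl j qj hq
              rw [Function.update_of_ne hj]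
              exact ⟨h1, (Function.update_of_ne hj _ _).trans h2⟩
          · intro j t ht
            by_cases hj : j = i
            · subst hj
              rw [hg'] at ht
              obtain rfl := Sum.inr.inj ht
              refine ⟨?_, ?_, ?_⟩
              · simp [cnew, outCfg, Function.update_self]
              · intro _
                show Function.update ck.st j q' j = q'
                exact Function.update_self _ _ _
              · intro hd; exact absurd hd (by simp)
            · rw [hst _ (sig_ne_fst _ _ hj)] at ht
              obtain ⟨h1, h2, h3⟩ := hrel.stInr j t ht
              rw [Function.update_of_ne hj]
              refine ⟨h1, ?_, ?_⟩ <;> intro hd <;>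
                simp only [cknew, inpCfg, Function.update_of_ne hj]
              · exact (Function.update_of_ne hj _ _).trans (h2 hd)
              · exact (Function.update_of_ne hj _ _).trans (h3 hd)
          · intro j x hx
            have hpt : (⟨j, x⟩ : (k : I) × P k) ≠ ⟨i, hh i⟩ := by
              rcases eq_or_ne j i with rfl | hj
              · exact sig_ne_snd hx
              · exact sig_ne_fst _ _ hj
            by_cases hj : j = i
            · subst hj
              rw [Function.update_self]
              show (Function.update (c j).st (hh j) _) x = _
              rw [Function.update_of_ne hx, hrel.stLoc j x hx, hst _ hpt]
            · rw [Function.update_of_ne hj, hrel.stLoc j x hx, hst _ hpt]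
          · intro j x y hx
            have hne : ((⟨j, x⟩ : (k : I) × P k), (⟨j, y⟩ : (k : I) × P k)) ≠
                (⟨r0, hh r0⟩, ⟨i, hh i⟩) := by
              rcases eq_or_ne j r0 with rfl | hj
              · exact pair_ne_fst (sig_ne_snd hx)
              · exact pair_ne_fst (sig_ne_fst _ _ hj)
            rw [hch2 _ _ hne]
            by_cases hj : j = i
            · subst hj
              rw [Function.update_self]
              show _ = if x = hh j ∧ y = s0 then _ else (c j).ch x y
              rw [if_neg (fun hc => hx hc.1)]
              exact hrel.chLoc j x y hx
            · rw [Function.update_of_ne hj]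
              exact hrel.chLoc j x y hx
          · intro j r
            by_cases hj : j = i
            · subst hj
              rw [Function.update_self, hg',
                hch2 _ _ (pair_ne_fst (sig_ne_fst _ _ (Ne.symm hr0))), pend_inr]
              by_cases hr : r = s0
              · subst hr
                show (if hh j = hh j ∧ r = r then (c j).ch (hh j) r ++ [a] else _) = _
                rw [if_pos ⟨rfl, rfl⟩, if_pos (by simp), hrel.chGw j r, hg, pend_inl,
                  List.append_nil]
              · show (if hh j = hh j ∧ r = s0 then _ else (c j).ch (hh j) r) = _
                rw [if_neg (fun hc => hr hc.2), if_neg (fun hc => hr hc.2.symm),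
                  List.append_nil, hrel.chGw j r, hg, pend_inl, List.append_nil]
            · rw [Function.update_of_ne hj, hst _ (sig_ne_fst _ _ hj),
                hch2 _ _ (pair_ne_snd (sig_ne_fst _ _ hj))]
              exact hrel.chGw j r
          · intro x y
            by_cases hxy : x = r0 ∧ y = i
            · obtain ⟨rfl, rfl⟩ := hxy
              show (if x = x ∧ y = y then s2.ch ⟨x, hh x⟩ ⟨y, hh y⟩ else _) = _
              rw [if_pos ⟨rfl, rfl⟩]
            · show (if x = r0 ∧ y = i then _ else ck.ch x y) = _
              rw [if_neg hxy, hch2 _ _ ?_]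
              · exact hrel.chK x y
              · intro he
                apply hxy
                have h1 := congrArg (fun z => z.1.1) he
                have h2 := congrArg (fun z => z.2.1) he
                simp only at h1 h2
                exact ⟨h1, h2⟩
          · intro x y px qy hxy hor
            rw [hch2 _ _ ?_]
            · exact hrel.chCross x y px qy hxy hor
            · intro he
              rw [Prod.mk.injEq] at he
              obtain ⟨he1, he2⟩ := he
              rcases hor with hpx | hqy
              · obtain ⟨rfl, h2⟩ := Sigma.mk.inj_iff.mp he1
                exact hpx (heq_iff_eq.mp h2)
              · obtain ⟨rfl, h2⟩ := Sigma.mk.inj_iff.mp he2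
                exact hqy (heq_iff_eq.mp h2)
        · simp only [Prod.mk.injEq, Act.mk.injEq] at hx
          exact absurd hx.2.1.2.2.1 (by simp)
        · -- I2 : gateway receives from its own system; mirror S_i input
          simp only [Prod.mk.injEq, Act.mk.injEq] at hx
          obtain ⟨hg, ⟨hls, -, -, ha⟩, hg'⟩ := hx
          subst hls; subst ha
          obtain ⟨hc_st, hck_st⟩ := hrel.stInl i q hg
          have hs0 : s0 ≠ hh i := (hwf i (hh i) _ hdel).2
          set cnew := inpCfg (S i) (c i) s0 (hh i) a q' (s2.ch ⟨i, s0⟩ ⟨i, hh i⟩) with hcnew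
          have hstep_i : StepL (S i) (c i) (Act.mk s0 (hh i) Dir.inp a) cnew :=
            stepL_inpCfg _ _ (by rw [hc_st]; exact hdel)
              (by rw [← hrel.chLoc i s0 (hh i) hs0, hch1])
          refine ⟨Function.update c i cnew, ck, ?_, hckR, ?_⟩
          · intro j; by_cases hj : j = i
            · subst hj; rw [Function.update_self]
              exact Relation.ReflTransGen.tail (hcR j) ⟨_, hstep_i⟩
            · rw [Function.update_of_ne hj]; exact hcR j
          constructor
          · intro j qj hq
            by_cases hj : j = i
            · subst hj; rw [hg'] at hq; cases hq
            · rw [hst _ (sig_ne_fst _ _ hj)] at hq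
              obtain ⟨h1, h2⟩ := hrel.stInl j qj hq
              rw [Function.update_of_ne hj]
              exact ⟨h1, h2⟩
          · intro j t ht
            by_cases hj : j = i
            · subst hj
              rw [hg'] at ht
              obtain rfl := Sum.inr.inj ht
              refine ⟨?_, ?_, ?_⟩
              · simp [cnew, inpCfg, Function.update_self]
              · intro hd; exact absurd hd (by simp)
              · intro _; exact hck_st
            · rw [hst _ (sig_ne_fst _ _ hj)] at ht
              obtain ⟨h1, h2, h3⟩ := hrel.stInr j t ht
              rw [Function.update_of_ne hj]
              exact ⟨h1, h2, h3⟩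
          · intro j x hx
            have hpt : (⟨j, x⟩ : (k : I) × P k) ≠ ⟨i, hh i⟩ := by
              rcases eq_or_ne j i with rfl | hj
              · exact sig_ne_snd hx
              · exact sig_ne_fst _ _ hj
            by_cases hj : j = i
            · subst hj
              rw [Function.update_self]
              show (Function.update (c j).st (hh j) _) x = _
              rw [Function.update_of_ne hx, hrel.stLoc j x hx, hst _ hpt]
            · rw [Function.update_of_ne hj, hrel.stLoc j x hx, hst _ hpt]
          · intro j x y hx
            by_cases hj : j = i
            · subst hj
              rw [Function.update_self]
              by_cases hxy : x = s0 ∧ y = hh j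
              · obtain ⟨rfl, rfl⟩ := hxy
                show _ = if x = x ∧ hh j = hh j then s2.ch ⟨j, x⟩ ⟨j, hh j⟩ else _
                rw [if_pos ⟨rfl, rfl⟩]
              · rw [hch2 _ _ (pair_sig_ne hxy)]
                show _ = if x = s0 ∧ y = hh j then _ else (c j).ch x y
                rw [if_neg hxy]
                exact hrel.chLoc j x y hx
            · rw [Function.update_of_ne hj,
                hch2 _ _ (pair_ne_fst (sig_ne_fst _ _ hj))]
              exact hrel.chLoc j x y hx
          · intro j r
            have hpt : (⟨j, hh j⟩ : (k : I) × P k) ≠ ⟨i, s0⟩ := by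
              rcases eq_or_ne j i with rfl | hj
              · exact sig_ne_snd (Ne.symm hs0)
              · exact sig_ne_fst _ _ hj
            by_cases hj : j = i
            · subst hj
              rw [Function.update_self, hg', pend_inr, if_neg (by simp),
                List.append_nil, hch2 _ _ (pair_ne_fst hpt)]
              show (if hh j = s0 ∧ r = hh j then _ else (c j).ch (hh j) r) = _
              rw [if_neg (fun hc => hs0 hc.1.symm), hrel.chGw j r, hg, pend_inl,
                List.append_nil]
            · rw [Function.update_of_ne hj, hst _ (sig_ne_fst _ _ hj),
                hch2 _ _ (pair_ne_fst hpt)]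
              exact hrel.chGw j r
          · intro x y
            have hpt : (⟨x, hh x⟩ : (k : I) × P k) ≠ ⟨i, s0⟩ := by
              rcases eq_or_ne x i with rfl | hj
              · exact sig_ne_snd (Ne.symm hs0)
              · exact sig_ne_fst _ _ hj
            rw [hch2 _ _ (pair_ne_fst hpt)]
            exact hrel.chK x y
          · intro x y px qy hxy hor
            rw [hch2 _ _ ?_]
            · exact hrel.chCross x y px qy hxy hor
            · intro he
              apply hxy
              have h1 := congrArg (fun z => z.1.1) he
              have h2 := congrArg (fun z => z.2.1) he
              simp only at h1 h2
              rw [h1, h2]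
        · simp only [Prod.mk.injEq, Act.mk.injEq] at hx
          exact absurd hx.2.1.2.2.1 (by simp)
      · -- local input in system i
        rw [mem_delta_loc S hh Kd i hp] at hmem
        obtain ⟨⟨l0s, l0r, l0d, l0m⟩, hmem0, heq⟩ := hmem
        simp only [liftAct, Act.mk.injEq] at heq
        obtain ⟨hls, hrcv, hdir, hmsg⟩ := heq
        have hpr : p = l0r := heq_iff_eq.mp (Sigma.mk.inj_iff.mp hrcv).2
        subst hpr; subst hls; subst hdir; subst hmsg
        have hgwne : ∀ j : I, (⟨j, hh j⟩ : (k : I) × P k) ≠ ⟨i, p⟩ := by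
          intro j; rcases eq_or_ne j i with rfl | hj
          · exact sig_ne_snd (Ne.symm hp)
          · exact sig_ne_fst _ _ hj
        have hgfix : ∀ j, toGW S hh j (s2.st ⟨j, hh j⟩) = toGW S hh j (s1.st ⟨j, hh j⟩) :=
          fun j => congrArg _ (hst _ (hgwne j))
        set w := s2.ch ⟨i, l0s⟩ ⟨i, p⟩ ++
          (if l0s = hh i then pend (toGW S hh i (s1.st ⟨i, hh i⟩)) p else []) with hwdef
        have hw : (c i).ch l0s p = a :: w := by
          rcases eq_or_ne l0s (hh i) with rfl | hsrc
          · rw [hwdef, if_pos rfl, hrel.chGw i p, hch1, List.cons_append]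
          · rw [hwdef, if_neg hsrc, List.append_nil, ← hrel.chLoc i l0s p hsrc, hch1]
        set cnew := inpCfg (S i) (c i) l0s p a (toLoc S hh hp (s2.st ⟨i, p⟩)) w with hcnew
        have hstep_i : StepL (S i) (c i) (Act.mk l0s p Dir.inp a) cnew :=
          stepL_inpCfg _ _ (by rw [hrel.stLoc i p hp]; exact hmem0) hw
        refine ⟨Function.update c i cnew, ck, ?_, hckR, ?_⟩
        · intro j; by_cases hj : j = i
          · subst hj; rw [Function.update_self]
            exact Relation.ReflTransGen.tail (hcR j) ⟨_, hstep_i⟩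
          · rw [Function.update_of_ne hj]; exact hcR j
        constructor
        · intro j qj hq
          rw [hst _ (hgwne j)] at hq
          obtain ⟨h1, h2⟩ := hrel.stInl j qj hq
          refine ⟨?_, h2⟩
          by_cases hj : j = i
          · subst hj
            rw [Function.update_self]
            show (Function.update (c j).st p _) (hh j) = qj
            rw [Function.update_of_ne (Ne.symm hp)]
            exact h1
          · rw [Function.update_of_ne hj]; exact h1
        · intro j t ht
          rw [hst _ (hgwne j)] at ht
          obtain ⟨h1, h2, h3⟩ := hrel.stInr j t ht
          refine ⟨?_, h2, h3⟩
          by_cases hj : j = i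
          · subst hj
            rw [Function.update_self]
            show (Function.update (c j).st p _) (hh j) = _
            rw [Function.update_of_ne (Ne.symm hp)]
            exact h1
          · rw [Function.update_of_ne hj]; exact h1
        · intro j x hx
          by_cases hj : j = i
          · subst hj
            rw [Function.update_self]
            by_cases hxp : x = p
            · subst hxp
              show (Function.update (c j).st x _) x = _
              rw [Function.update_self]
            · show (Function.update (c j).st p _) x = _
              rw [Function.update_of_ne hxp, hrel.stLoc j x hx,
                hst _ (sig_ne_snd hxp)]
          · rw [Function.update_of_ne hj, hrel.stLoc j x hx,
              hst _ (sig_ne_fst _ _ hj)]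
        · intro j x y hx
          by_cases hj : j = i
          · subst hj
            rw [Function.update_self]
            by_cases hxy : x = l0s ∧ y = p
            · obtain ⟨rfl, rfl⟩ := hxy
              show _ = if x = x ∧ y = y then w else _
              rw [if_pos ⟨rfl, rfl⟩, hwdef, if_neg hx, List.append_nil]
            · rw [hch2 _ _ (pair_sig_ne hxy)]
              show _ = if x = l0s ∧ y = p then _ else (c j).ch x y
              rw [if_neg hxy]
              exact hrel.chLoc j x y hx
          · rw [Function.update_of_ne hj, hch2 _ _ (pair_ne_fst (sig_ne_fst _ _ hj))]
            exact hrel.chLoc j x y hx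
        · intro j r
          by_cases hj : j = i
          · subst hj
            rw [Function.update_self, hgfix j]
            by_cases hre : hh j = l0s ∧ r = p
            · obtain ⟨he1, rfl⟩ := hre
              show (if hh j = l0s ∧ r = r then w else _) = _
              rw [if_pos ⟨he1, rfl⟩, hwdef, if_pos he1.symm, ← he1]
            · show (if hh j = l0s ∧ r = p then _ else (c j).ch (hh j) r) = _
              rw [if_neg hre, hch2 _ _ (pair_sig_ne hre)]
              exact hrel.chGw j r
          · rw [Function.update_of_ne hj, hgfix j,
              hch2 _ _ (pair_ne_fst (sig_ne_fst _ _ hj))]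
            exact hrel.chGw j r
        · intro x y
          have hpt : (⟨y, hh y⟩ : (k : I) × P k) ≠ ⟨i, p⟩ := by
            rcases eq_or_ne y i with rfl | hy
            · exact sig_ne_snd (Ne.symm hp)
            · exact sig_ne_fst _ _ hy
          rw [hch2 _ _ (pair_ne_snd hpt)]
          exact hrel.chK x y
        · intro x y px qy hxy hor
          rw [hch2 _ _ ?_]
          · exact hrel.chCross x y px qy hxy hor
          · intro he
            apply hxy
            have h1 := congrArg (fun z => z.1.1) he
            have h2 := congrArg (fun z => z.2.1) he
            simp only at h1 h2
            rw [h1, h2]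

lemma MC_deadlockFree {CM : Set (I × A × I)}
    (hwf : ∀ i, (S i).WellFormed)
    (hnomix : ∀ i, NoMixed ((S i).delta (hh i)))
    (hK : IsConnPolicy S hh CM Kd)
    (hS : ∀ i, DeadlockFree (S i))
    (hKfree : DeadlockFree (policyCS S hh Kd)) :
    DeadlockFree (MC S hh Kd) := by
  intro s hs hdead
  obtain ⟨c, ck, hcR, hckR, hrel⟩ := inv_reach S hh Kd hwf hK s hs
  obtain ⟨hch, hrecv⟩ := hdead
  have hinl : ∀ i, ∃ q, toGW S hh i (s.st ⟨i, hh i⟩) = Sum.inl q := by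
    intro i
    cases hgw : toGW S hh i (s.st ⟨i, hh i⟩) with
    | inl q => exact ⟨q, rfl⟩
    | inr t =>
      exfalso
      obtain ⟨⟨l, qe, hmem⟩, hall⟩ := hrecv ⟨i, hh i⟩
      have hdir := hall l qe hmem
      rw [mem_delta_gw] at hmem
      simp only [GWdelta, Set.mem_setOf_eq] at hmem
      obtain ⟨q0, a0, q0', hdis⟩ := hmem
      rcases hdis with ⟨s0, r0, -, -, hx | hx⟩ | ⟨s0, r0, -, -, hx | hx⟩ <;>
        rw [Prod.mk.injEq, Prod.mk.injEq] at hx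
      · rw [hgw] at hx; cases hx.1
      · rw [hx.2.1] at hdir; exact absurd hdir (by simp)
      · rw [hgw] at hx; cases hx.1
      · rw [hx.2.1] at hdir; exact absurd hdir (by simp)
  choose Q hQ using hinl
  have hcQ : ∀ i, (c i).st (hh i) = Q i := fun i => (hrel.stInl i _ (hQ i)).1
  have hckQ : ∀ i, ck.st i = Q i := fun i => (hrel.stInl i _ (hQ i)).2
  by_cases hex : ∃ i r a q', (Q i, Act.mk r (hh i) Dir.inp a, q') ∈ (S i).delta (hh i)
  · obtain ⟨i, r1, a1, q1', hin⟩ := hex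
    refine hS i (c i) (hcR i) ⟨?_, ?_⟩
    · intro x y
      by_cases hx : x = hh i
      · subst hx
        rw [hrel.chGw i y, hQ i, pend_inl, List.append_nil, hch]
      · rw [← hrel.chLoc i x y hx, hch]
    · intro x
      by_cases hx : x = hh i
      · subst hx
        rw [hcQ i]
        refine ⟨⟨_, _, hin⟩, ?_⟩
        intro l q'' hmem
        cases hd : l.dir with
        | inp => rfl
        | out =>
          exact absurd ⟨⟨l, q'', hmem, hd⟩, ⟨_, _, hin, rfl⟩⟩ (hnomix i (Q i))
      · obtain ⟨⟨l, x', hmem⟩, hall⟩ := hrecv ⟨i, x⟩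
        rw [mem_delta_loc S hh Kd i hx] at hmem
        obtain ⟨l0, hmem0, rfl⟩ := hmem
        rw [hrel.stLoc i x hx]
        refine ⟨⟨l0, _, hmem0⟩, ?_⟩
        intro l0' q'' hmem'
        obtain ⟨x'', hx''⟩ : ∃ x'' : (MC S hh Kd).St ⟨i, x⟩, toLoc S hh hx x'' = q'' :=
          ⟨cast (show (S i).St x = MCSt S hh ⟨i, x⟩ by simp [MCSt, hx]) q'',
            eq_of_heq ((cast_heq _ _).trans (cast_heq _ _))⟩
        have hmem_mc : (s.st ⟨i, x⟩, liftAct i l0', x'') ∈ (MC S hh Kd).delta ⟨i, x⟩ := by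
          rw [mem_delta_loc S hh Kd i hx]
          refine ⟨l0', ?_, rfl⟩
          rw [hx'']
          exact hmem'
        exact hall _ _ hmem_mc
  · push_neg at hex
    refine hKfree ck hckR ⟨?_, ?_⟩
    · intro x y
      rw [hrel.chK x y, hch]
    · intro i
      rw [show (policyCS S hh Kd).delta i = Kd i from rfl, hckQ i]
      constructor
      · obtain ⟨⟨l, qe, hmem⟩, -⟩ := hrecv ⟨i, hh i⟩
        rw [mem_delta_gw] at hmem
        simp only [GWdelta, Set.mem_setOf_eq] at hmem
        obtain ⟨q0, a0, q0', hdis⟩ := hmem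
        rcases hdis with ⟨s0, r0, -, hkd, hx | hx⟩ | ⟨s0, r0, -, hkd, hx | hx⟩ <;>
          rw [Prod.mk.injEq, Prod.mk.injEq] at hx
        · rw [hQ i] at hx
          obtain rfl := (Sum.inl.inj hx.1.symm)
          exact ⟨_, _, hkd⟩
        · rw [hQ i] at hx; cases hx.1
        · rw [hQ i] at hx
          obtain rfl := (Sum.inl.inj hx.1.symm)
          exact ⟨_, _, hkd⟩
        · rw [hQ i] at hx; cases hx.1
      · intro la q'' hmem_k
        rcases kd_shape S hh Kd hK i (t := ((Q i, la, q'') : (S i).St (hh i) × Act I A × (S i).St (hh i))) hmem_k with ⟨q2, j2, a2, q2', hj2, hteq, s2w, hdel2⟩ |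
          ⟨q2, j2, a2, q2', hj2, hteq, s2w, hdel2⟩ <;>
          rw [Prod.mk.injEq] at hteq
        · exfalso
          exact hex i s2w a2 q2' (by rw [hteq.1]; exact hdel2)
        · rw [show la = _ from congrArg Prod.fst hteq.2]

end Composition

end CFSM
open CFSM in
/-- PaI multicomposition preserves deadlock-freeness, provided the
interfaces have no mixed states and the connection policy is deadlock-free. -/
theorem deadlockFree_preserved_by_multicomposition
    {I : Type} [Finite I] {P : I → Type} [∀ i, Finite (P i)] {A : Type} [Finite A]
    (S : ∀ i, CS (P i) A)
    (hfin : ∀ i p, Finite ((S i).St p))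
    (hwf : ∀ i, (S i).WellFormed)
    (hh : ∀ i, P i)
    (hnomix : ∀ i, NoMixed ((S i).delta (hh i)))
    (CM : Set (I × A × I)) (hCM : IsConnModel S hh CM)
    (Kd : ∀ i, Set ((S i).St (hh i) × Act I A × (S i).St (hh i)))
    (hK : IsConnPolicy S hh CM Kd)
    (hS : ∀ i, DeadlockFree (S i))
    (hKfree : DeadlockFree (policyCS S hh Kd)) :
    DeadlockFree (MC S hh Kd) := by
  exact CFSM.MC_deadlockFree S hh Kd hwf hnomix hK hS hKfree
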